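/- Let F be a field with char F ≠ 2 and let I be an infinite set. Then for every derivation d of the Lie algebra o_∞(I,F) there exists a matrix y ∈ M_rcf(I,F) with yᵗ = −y such that d(a) = ya − ay for all a ∈ o_∞(I,F). -/

import Mathlib

open Matrix

/-- The product of two `I × I` matrices, defined via `finsum`; it is well defined
whenever one factor is finitary or both are row-and-column-finite. -/
noncomputable def matMul {F I : Type*} [Field F] (a b : Matrix I I F) : Matrix I I F :=
  fun i j => ∑ᶠ k, a i k * b k j

/-- A finitary matrix: only finitely many nonzero entries. -/
def IsFinitary {F I : Type*} [Field F] (a : Matrix I I F) : Prop :=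
  {p : I × I | a p.1 p.2 ≠ 0}.Finite

/-- A matrix has finitely many nonzero entries in each row and in each column. -/
def IsRcf {F I : Type*} [Field F] (a : Matrix I I F) : Prop :=
  (∀ i, {j | a i j ≠ 0}.Finite) ∧ (∀ j, {i | a i j ≠ 0}.Finite)

/-- Membership in `o_∞(I,F)`: a finitary skew-symmetric matrix. -/
def IsSkewFin {F I : Type*} [Field F] (a : Matrix I I F) : Prop :=
  IsFinitary a ∧ aᵀ = -a

namespace Stmt10

variable {F I : Type*} [Field F]

attribute [local instance] Classical.propDecidable

/-- The elementary skew matrix `e_{ij} - e_{ji}`. -/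
noncomputable def E (i j : I) : Matrix I I F :=
  fun k l => (if k = i ∧ l = j then (1:F) else 0) - (if k = j ∧ l = i then (1:F) else 0)

lemma E_apply (i j k l : I) :
    (E i j : Matrix I I F) k l
      = (if k = i ∧ l = j then (1:F) else 0) - (if k = j ∧ l = i then (1:F) else 0) := rfl

lemma matMul_E_right (a : Matrix I I F) {i j : I} (hij : i ≠ j) (p q : I) :
    matMul a (E i j) p q = (if q = j then a p i else 0) - (if q = i then a p j else 0) := by
  classical
  show ∑ᶠ k, a p k * (E i j) k q = _
  by_cases hq : q = j
  · subst hq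
    rw [finsum_eq_single _ i (fun m hm => by simp [E_apply, hm, hij.symm])]
    simp [E_apply, hij.symm]
  · by_cases hq' : q = i
    · subst hq'
      rw [finsum_eq_single _ j (fun m hm => by simp [E_apply, hm, hij, hq])]
      simp [E_apply, hij, hq]
    · have h0 : ∀ k, a p k * (E i j) k q = 0 := by
        intro k; simp [E_apply, hq, hq']
      rw [finsum_congr h0]
      simp [hq, hq']

lemma matMul_E_left (a : Matrix I I F) {i j : I} (hij : i ≠ j) (p q : I) :
    matMul (E i j) a p q = (if p = i then a j q else 0) - (if p = j then a i q else 0) := by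
  classical
  show ∑ᶠ k, (E i j) p k * a k q = _
  by_cases hp : p = i
  · subst hp
    rw [finsum_eq_single _ j (fun m hm => by simp [E_apply, hm, hij])]
    simp [E_apply, hij]
  · by_cases hp' : p = j
    · subst hp'
      rw [finsum_eq_single _ i (fun m hm => by simp [E_apply, hm, hij.symm, hp])]
      simp [E_apply, hij.symm, hp]
    · have h0 : ∀ k, (E i j) p k * a k q = 0 := by
        intro k; simp [E_apply, hp, hp']
      rw [finsum_congr h0]
      simp [hp, hp']

lemma E_bracket {a b c : I} (hab : a ≠ b) (hbc : b ≠ c) (hac : a ≠ c) :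
    matMul (E a b) (E b c) - matMul (E b c) (E a b) = (E a c : Matrix I I F) := by
  classical
  have hba := hab.symm
  have hcb := hbc.symm
  have hca := hac.symm
  funext p q
  simp only [Matrix.sub_apply]
  rw [matMul_E_right _ hbc, matMul_E_right _ hab, E_apply, E_apply, E_apply]
  by_cases h1 : p = a <;> by_cases h2 : p = b <;> by_cases h3 : p = c <;>
    by_cases h4 : q = a <;> by_cases h5 : q = b <;> by_cases h6 : q = c <;>
    simp_all [E_apply] <;> try ring

lemma E_skewfin {i j : I} (hij : i ≠ j) : IsSkewFin (E i j : Matrix I I F) := by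
  constructor
  · apply Set.Finite.subset (((Set.finite_singleton ((j,i) : I × I)).insert ((i,j) : I × I)))
    intro p hp
    simp only [Set.mem_setOf_eq, E_apply] at hp
    simp only [Set.mem_insert_iff, Set.mem_singleton_iff]
    by_cases h1 : p.1 = i ∧ p.2 = j
    · exact Or.inl (Prod.ext h1.1 h1.2)
    · by_cases h2 : p.1 = j ∧ p.2 = i
      · exact Or.inr (Prod.ext h2.1 h2.2)
      · simp [h1, h2] at hp
  · funext k l
    simp only [transpose_apply, Matrix.neg_apply, E_apply]
    by_cases h1 : l = i ∧ k = j <;> by_cases h2 : l = j ∧ k = i <;>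
      simp_all [and_comm] <;> try ring

lemma E_neg (i j : I) : (E j i : Matrix I I F) = -E i j := by
  funext k l
  simp only [Matrix.neg_apply, E_apply]
  ring

lemma col_finite {a : Matrix I I F} (ha : IsFinitary a) (j : I) : {k | a k j ≠ 0}.Finite :=
  (ha.image Prod.fst).subset (fun k hk => ⟨(k, j), hk, rfl⟩)

lemma row_finite {a : Matrix I I F} (ha : IsFinitary a) (i : I) : {k | a i k ≠ 0}.Finite :=
  (ha.image Prod.snd).subset (fun k hk => ⟨(i, k), hk, rfl⟩)

lemma skew_diag {x : Matrix I I F} (h2 : (2:F) ≠ 0) (hx : xᵀ = -x) (i : I) : x i i = 0 := by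
  have := congrFun (congrFun hx i) i
  simp only [transpose_apply, Matrix.neg_apply] at this
  have h : x i i + x i i = 0 := by linear_combination this
  rw [← two_mul] at h
  exact (mul_eq_zero.mp h).resolve_left h2

/-- The fundamental entrywise formula for `d (E a c)` coming from the derivation
property applied to `E a c = [E a b, E b c]`. -/
lemma deriv_entry (d : Matrix I I F → Matrix I I F)
    (hbracket : ∀ a b, IsSkewFin a → IsSkewFin b →
      d (matMul a b - matMul b a) =
        (matMul (d a) b - matMul b (d a)) + (matMul a (d b) - matMul (d b) a))
    {a b c : I} (hab : a ≠ b) (hbc : b ≠ c) (hac : a ≠ c) (p q : I) :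
    d (E a c) p q =
      (((if q = c then d (E a b) p b else 0) - (if q = b then d (E a b) p c else 0))
        - ((if p = b then d (E a b) c q else 0) - (if p = c then d (E a b) b q else 0)))
      + (((if p = a then d (E b c) b q else 0) - (if p = b then d (E b c) a q else 0))
        - ((if q = b then d (E b c) p a else 0) - (if q = a then d (E b c) p b else 0))) := by
  have h := hbracket (E a b) (E b c) (E_skewfin hab) (E_skewfin hbc)
  rw [E_bracket hab hbc hac] at h
  have h2 := congrFun (congrFun h p) q
  simp only [Matrix.add_apply, Matrix.sub_apply] at h2
  rw [matMul_E_right _ hbc, matMul_E_left _ hbc, matMul_E_left _ hab, matMul_E_right _ hab] at h2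
  exact h2

end Stmt10

open Stmt10

/-- For `char F ≠ 2` and `I` infinite, every derivation `d` of the Lie
algebra `o_∞(I,F)` is of the form `d(a) = y*a - a*y` for some skew-symmetric
`y ∈ M_rcf(I,F)`. -/
theorem stmt_10 (F I : Type*) [Field F] [Infinite I] (hchar : ringChar F ≠ 2)
    (d : Matrix I I F → Matrix I I F)
    (hmap : ∀ a, IsSkewFin a → IsSkewFin (d a))
    (hadd : ∀ a b, IsSkewFin a → IsSkewFin b → d (a + b) = d a + d b)
    (hsmul : ∀ (c : F) (a), IsSkewFin a → d (c • a) = c • d a)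
    (hbracket : ∀ a b, IsSkewFin a → IsSkewFin b →
      d (matMul a b - matMul b a) =
        (matMul (d a) b - matMul b (d a)) + (matMul a (d b) - matMul (d b) a)) :
    ∃ y : Matrix I I F, IsRcf y ∧ yᵀ = -y ∧
      ∀ a, IsSkewFin a → d a = matMul y a - matMul a y := by
  classical
  have h2 : (2:F) ≠ 0 := Ring.two_ne_zero hchar
  have hES : ∀ (i j : I), i ≠ j → IsSkewFin (E i j : Matrix I I F) := fun _ _ h => E_skewfin h
  have key := fun (a b c : I) hab hbc hac (p q : I) =>
    deriv_entry d hbracket (a := a) (b := b) (c := c) hab hbc hac p q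
  have hdskew : ∀ (i j : I), i ≠ j → (d (E i j))ᵀ = -(d (E i j)) :=
    fun i j h => (hmap _ (hES i j h)).2
  have hdfin : ∀ (i j : I), i ≠ j → IsFinitary (d (E i j)) := fun i j h => (hmap _ (hES i j h)).1
  have hdiag : ∀ (i j k : I), i ≠ j → d (E i j) k k = 0 :=
    fun i j k h => skew_diag h2 (hdskew i j h) k
  have hdT : ∀ (i j p q : I), i ≠ j → d (E i j) q p = -(d (E i j) p q) := by
    intro i j p q h
    have := congrFun (congrFun (hdskew i j h) p) q
    simpa using this
  have hdneg : ∀ (i j : I), i ≠ j → d (E j i) = -(d (E i j)) := by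
    intro i j h
    have hE : (E j i : Matrix I I F) = (-1 : F) • E i j := by rw [E_neg]; simp
    rw [hE, hsmul _ _ (hES i j h)]; simp
  -- (A) entries of d (E i k) away from i, k vanish
  have hA : ∀ i k p q : I, i ≠ k → p ≠ i → p ≠ k → q ≠ i → q ≠ k → d (E i k) p q = 0 := by
    intro i k p q hik hpi hpk hqi hqk
    obtain ⟨j, hj⟩ := Infinite.exists_notMem_finset ({i, k, p, q} : Finset I)
    simp only [Finset.mem_insert, Finset.mem_singleton, not_or] at hj
    obtain ⟨hji, hjk, hjp, hjq⟩ := hj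
    have h := key i j k (Ne.symm hji) hjk hik p q
    simpa [hqk, hqi, Ne.symm hjq, hpk, hpi, Ne.symm hjp] using h
  -- independence of the auxiliary index
  have hInd : ∀ i j k p : I, i ≠ j → j ≠ k → i ≠ k → p ≠ i → p ≠ j → p ≠ k →
      d (E i k) p k = d (E i j) p j := by
    intro i j k p hij hjk hik hpi hpj hpk
    have h := key i j k hij hjk hik p k
    simpa [Ne.symm hjk, Ne.symm hik, hpi, hpj, hpk] using h
  -- the "cocycle" on diagonal-like entries
  have hcadd : ∀ i j k : I, i ≠ j → j ≠ k → i ≠ k →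
      d (E i k) i k = d (E i j) i j + d (E j k) j k := by
    intro i j k hij hjk hik
    have h := key i j k hij hjk hik i k
    simpa [hij, hik, Ne.symm hjk, Ne.symm hik] using h
  have hcsymm : ∀ i k : I, i ≠ k → d (E k i) k i = d (E i k) i k := by
    intro i k h
    rw [hdneg i k h]
    simp only [Matrix.neg_apply]
    rw [hdT i k i k h]
    simp
  have hc0 : ∀ j k : I, j ≠ k → d (E j k) j k = 0 := by
    intro j k hjk
    obtain ⟨i, hi⟩ := Infinite.exists_notMem_finset ({j, k} : Finset I)
    simp only [Finset.mem_insert, Finset.mem_singleton, not_or] at hi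
    obtain ⟨hij, hik⟩ := hi
    have e1 := hcadd i j k hij hjk hik
    have e2 := hcadd i k j hik (Ne.symm hjk) hij
    have e3 := hcsymm j k hjk
    have h4 : (2:F) * d (E j k) j k = 0 := by linear_combination -e1 - e2 - e3
    exact (mul_eq_zero.mp h4).resolve_left h2
  -- construct y
  have hpickex : ∀ p i : I, ∃ j : I, j ≠ p ∧ j ≠ i := by
    intro p i
    obtain ⟨j, hj⟩ := Infinite.exists_notMem_finset ({p, i} : Finset I)
    simp only [Finset.mem_insert, Finset.mem_singleton, not_or] at hj
    exact ⟨j, hj⟩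
  choose pick hpick1 hpick2 using hpickex
  obtain ⟨y, hy0, hyval⟩ : ∃ y : Matrix I I F, (∀ i, y i i = 0) ∧
      (∀ p i, p ≠ i → y p i = d (E i (pick p i)) p (pick p i)) :=
    ⟨fun p i => if p = i then 0 else d (E i (pick p i)) p (pick p i),
      fun i => if_pos rfl, fun p i h => if_neg h⟩
  have hy : ∀ p i j : I, p ≠ i → j ≠ p → j ≠ i → y p i = d (E i j) p j := by
    intro p i j hpi hjp hji
    rw [hyval p i hpi]
    by_cases h : pick p i = j
    · rw [h]
    · exact hInd i j (pick p i) p (Ne.symm hji) (Ne.symm h) (Ne.symm (hpick2 p i))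
        hpi (Ne.symm hjp) (Ne.symm (hpick1 p i))
  -- skew-symmetry of y
  have hyskew : ∀ p q : I, y q p = -(y p q) := by
    intro p q
    by_cases hpq : p = q
    · subst hpq; simp [hy0]
    · obtain ⟨j, hjq, hjp⟩ : ∃ j : I, j ≠ q ∧ j ≠ p :=
        ⟨pick q p, hpick1 q p, hpick2 q p⟩
      rw [hy q p j (Ne.symm hpq) hjq hjp, hy p q j hpq hjp hjq]
      have h := key p q j hpq (Ne.symm hjq) (Ne.symm hjp) q j
      simpa [hjq, hjp, Ne.symm hjq, Ne.symm hjp, hpq, Ne.symm hpq,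
        hdiag p q q hpq, hdiag p q j hpq] using h
  -- row/column finiteness of y
  have hcolfin : ∀ i : I, {p | y p i ≠ 0}.Finite := by
    intro i
    obtain ⟨j0, hj0i⟩ : ∃ j0 : I, j0 ≠ i := ⟨pick i i, hpick2 i i⟩
    apply Set.Finite.subset ((col_finite (hdfin i j0 (Ne.symm hj0i)) j0).union
      (Set.finite_singleton j0))
    intro p hp
    simp only [Set.mem_setOf_eq] at hp
    by_cases hpj : p = j0
    · exact Or.inr hpj
    · left
      have hpi : p ≠ i := fun h => hp (by rw [h, hy0])
      show d (E i j0) p j0 ≠ 0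
      rw [← hy p i j0 hpi (fun h => hpj h.symm) hj0i]
      exact hp
  have hrowfin : ∀ i : I, {q | y i q ≠ 0}.Finite := by
    intro i
    apply (hcolfin i).subset
    intro q hq
    simp only [Set.mem_setOf_eq] at hq ⊢
    intro h0
    exact hq (by rw [hyskew q i, h0, neg_zero])
  -- key entry values of d (E i j)
  have hE_pj : ∀ i j p : I, i ≠ j → p ≠ i → p ≠ j → d (E i j) p j = y p i :=
    fun i j p hij hpi hpj => (hy p i j hpi (Ne.symm hpj) (Ne.symm hij)).symm
  have hE_pi : ∀ i j p : I, i ≠ j → p ≠ i → p ≠ j → d (E i j) p i = -(y p j) := by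
    intro i j p hij hpi hpj
    rw [hdneg j i (Ne.symm hij)]
    simp only [Matrix.neg_apply]
    rw [← hy p j i hpj (Ne.symm hpi) hij]
  -- d agrees with ad y on basis elements
  have hDyE : ∀ i j : I, i ≠ j → d (E i j) = matMul y (E i j) - matMul (E i j) y := by
    intro i j hij
    funext p q
    rw [Matrix.sub_apply, matMul_E_right y hij p q, matMul_E_left y hij p q]
    by_cases hpi : p = i
    · by_cases hqi : q = i
      · simp only [hpi, hqi, if_pos rfl, if_true, eq_self_iff_true, if_neg hij, if_neg (Ne.symm hij)]
        linear_combination hdiag i j i hij + hyskew j i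
      · by_cases hqj : q = j
        · simp only [hpi, hqj, if_pos rfl, if_true, eq_self_iff_true, if_neg hij, if_neg (Ne.symm hij)]
          linear_combination hc0 i j hij - hy0 i + hy0 j
        · simp only [hpi, if_pos rfl, if_true, eq_self_iff_true, if_neg hij, if_neg (Ne.symm hij), if_neg hqi, if_neg hqj]
          linear_combination hdT i j q i hij - hE_pi i j q hij hqi hqj + hyskew j q
    · by_cases hpj : p = j
      · by_cases hqi : q = i
        · simp only [hpj, hqi, if_pos rfl, if_true, eq_self_iff_true, if_neg hij, if_neg (Ne.symm hij)]
          linear_combination hdT i j i j hij - hc0 i j hij + hy0 j - hy0 i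
        · by_cases hqj : q = j
          · simp only [hpj, hqj, if_pos rfl, if_true, eq_self_iff_true, if_neg hij, if_neg (Ne.symm hij)]
            linear_combination hdiag i j j hij - hyskew j i
          · simp only [hpj, if_pos rfl, if_true, eq_self_iff_true, if_neg hij, if_neg (Ne.symm hij), if_neg hqi, if_neg hqj]
            linear_combination hdT i j q j hij - hE_pj i j q hij hqi hqj - hyskew i q
      · by_cases hqi : q = i
        · simp only [hqi, if_pos rfl, if_true, eq_self_iff_true, if_neg hij, if_neg (Ne.symm hij), if_neg hpi, if_neg hpj]
          linear_combination hE_pi i j p hij hpi hpj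
        · by_cases hqj : q = j
          · simp only [hqj, if_pos rfl, if_true, eq_self_iff_true, if_neg hij, if_neg (Ne.symm hij), if_neg hpi, if_neg hpj]
            linear_combination hE_pj i j p hij hpi hpj
          · simp only [if_neg hpi, if_neg hpj, if_neg hqi, if_neg hqj]
            linear_combination hA i j p q hij hpi hpj hqi hqj
  -- linearity of ad y on finitary matrices
  have hsupp_col : ∀ (a : Matrix I I F), IsFinitary a → ∀ p q : I,
      (Function.support fun k => y p k * a k q).Finite := by
    intro a ha p q
    apply (col_finite ha q).subset
    intro k hk
    simp only [Function.mem_support] at hk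
    exact fun h0 => hk (by rw [h0, mul_zero])
  have hsupp_row : ∀ (a : Matrix I I F), IsFinitary a → ∀ p q : I,
      (Function.support fun k => a p k * y k q).Finite := by
    intro a ha p q
    apply (row_finite ha p).subset
    intro k hk
    simp only [Function.mem_support] at hk
    exact fun h0 => hk (by rw [h0, zero_mul])
  have haddR : ∀ a b : Matrix I I F, IsFinitary a → IsFinitary b →
      matMul y (a + b) = matMul y a + matMul y b := by
    intro a b ha hb
    funext p q
    show (∑ᶠ k, y p k * (a + b) k q) = (∑ᶠ k, y p k * a k q) + ∑ᶠ k, y p k * b k q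
    have h1 : ∀ k, y p k * (a + b) k q = y p k * a k q + y p k * b k q := by
      intro k; simp [Matrix.add_apply, mul_add]
    rw [finsum_congr h1, finsum_add_distrib (hsupp_col a ha p q) (hsupp_col b hb p q)]
  have haddL : ∀ a b : Matrix I I F, IsFinitary a → IsFinitary b →
      matMul (a + b) y = matMul a y + matMul b y := by
    intro a b ha hb
    funext p q
    show (∑ᶠ k, (a + b) p k * y k q) = (∑ᶠ k, a p k * y k q) + ∑ᶠ k, b p k * y k q
    have h1 : ∀ k, (a + b) p k * y k q = a p k * y k q + b p k * y k q := by
      intro k; simp [Matrix.add_apply, add_mul]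
    rw [finsum_congr h1, finsum_add_distrib (hsupp_row a ha p q) (hsupp_row b hb p q)]
  have hsmulR : ∀ (c : F) (a : Matrix I I F), IsFinitary a →
      matMul y (c • a) = c • matMul y a := by
    intro c a ha
    funext p q
    simp only [Matrix.smul_apply, smul_eq_mul]
    show (∑ᶠ k, y p k * (c • a) k q) = c * ∑ᶠ k, y p k * a k q
    have h1 : ∀ k, y p k * (c • a) k q = c * (y p k * a k q) := by
      intro k; simp only [Matrix.smul_apply, smul_eq_mul]; ring
    rw [finsum_congr h1, ← mul_finsum]
  have hsmulL : ∀ (c : F) (a : Matrix I I F), IsFinitary a →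
      matMul (c • a) y = c • matMul a y := by
    intro c a ha
    funext p q
    simp only [Matrix.smul_apply, smul_eq_mul]
    show (∑ᶠ k, (c • a) p k * y k q) = c * ∑ᶠ k, a p k * y k q
    have h1 : ∀ k, (c • a) p k * y k q = c * (a p k * y k q) := by
      intro k; simp only [Matrix.smul_apply, smul_eq_mul]; ring
    rw [finsum_congr h1, ← mul_finsum]
  have hzeroR : matMul y (0 : Matrix I I F) = 0 := by
    funext p q
    show (∑ᶠ k, y p k * (0 : Matrix I I F) k q) = (0 : Matrix I I F) p q
    have h1 : ∀ k : I, y p k * (0 : Matrix I I F) k q = 0 := by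
      intro k; simp [Matrix.zero_apply]
    rw [finsum_congr h1, finsum_zero]
    simp
  have hzeroL : matMul (0 : Matrix I I F) y = 0 := by
    funext p q
    show (∑ᶠ k, (0 : Matrix I I F) p k * y k q) = (0 : Matrix I I F) p q
    have h1 : ∀ k : I, (0 : Matrix I I F) p k * y k q = 0 := by
      intro k; simp [Matrix.zero_apply]
    rw [finsum_congr h1, finsum_zero]
    simp
  -- closure properties of IsSkewFin
  have hSF0 : IsSkewFin (0 : Matrix I I F) := by
    constructor
    · have h : {p : I × I | (0 : Matrix I I F) p.1 p.2 ≠ 0} = ∅ := by ext p; simp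
      show {p : I × I | (0 : Matrix I I F) p.1 p.2 ≠ 0}.Finite
      rw [h]; exact Set.finite_empty
    · simp
  have hSFadd : ∀ a b : Matrix I I F, IsSkewFin a → IsSkewFin b → IsSkewFin (a + b) := by
    intro a b ha hb
    constructor
    · apply (ha.1.union hb.1).subset
      intro p hp
      simp only [Set.mem_setOf_eq, Matrix.add_apply] at hp
      simp only [Set.mem_union, Set.mem_setOf_eq]
      by_cases h : a p.1 p.2 = 0
      · right; intro h0; exact hp (by rw [h, h0, add_zero])
      · left; exact h
    · rw [transpose_add, ha.2, hb.2, neg_add]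
  have hSFsmul : ∀ (c : F) (a : Matrix I I F), IsSkewFin a → IsSkewFin (c • a) := by
    intro c a ha
    constructor
    · apply ha.1.subset
      intro p hp
      simp only [Set.mem_setOf_eq, Matrix.smul_apply, smul_eq_mul] at hp ⊢
      exact fun h0 => hp (by rw [h0, mul_zero])
    · rw [transpose_smul, ha.2, smul_neg]
  have hd0 : d 0 = 0 := by
    have h := hadd 0 0 hSF0 hSF0
    simp only [add_zero] at h
    have h2' : d 0 + 0 = d 0 + d 0 := by rw [add_zero]; exact h
    exact (add_left_cancel h2').symm
  -- the main induction over finite sums of basis elements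
  have main : ∀ s : Finset (I × I), ∀ c : I × I → F, (∀ p ∈ s, p.1 ≠ p.2) →
      IsSkewFin (∑ p ∈ s, c p • (E p.1 p.2 : Matrix I I F)) ∧
      d (∑ p ∈ s, c p • (E p.1 p.2 : Matrix I I F)) =
        matMul y (∑ p ∈ s, c p • (E p.1 p.2 : Matrix I I F))
          - matMul (∑ p ∈ s, c p • (E p.1 p.2 : Matrix I I F)) y := by
    intro s
    induction s using Finset.induction_on with
    | empty =>
      intro c _
      simp only [Finset.sum_empty]
      exact ⟨hSF0, by rw [hd0, hzeroR, hzeroL, sub_zero]⟩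
    | @insert p s hns ih =>
      intro c hdist
      rw [Finset.sum_insert hns]
      have hp12 : p.1 ≠ p.2 := hdist p (Finset.mem_insert_self p s)
      have hrest := ih c (fun q hq => hdist q (Finset.mem_insert_of_mem hq))
      have hskE := hSFsmul (c p) _ (hES p.1 p.2 hp12)
      refine ⟨hSFadd _ _ hskE hrest.1, ?_⟩
      rw [hadd _ _ hskE hrest.1, hsmul _ _ (hES p.1 p.2 hp12), hDyE p.1 p.2 hp12, hrest.2,
        haddR _ _ hskE.1 hrest.1.1, haddL _ _ hskE.1 hrest.1.1,
        hsmulR _ _ (hES p.1 p.2 hp12).1, hsmulL _ _ (hES p.1 p.2 hp12).1, smul_sub]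
      abel
  refine ⟨y, ⟨hrowfin, hcolfin⟩, ?_, ?_⟩
  · funext p q
    simp only [transpose_apply, Matrix.neg_apply]
    exact hyskew p q
  · intro a ha
    have haskew : ∀ k l : I, a l k = -(a k l) := by
      intro k l
      have := congrFun (congrFun ha.2 k) l
      simpa using this
    set S := ha.1.toFinset with hS
    have hmemS : ∀ p : I × I, p ∈ S ↔ a p.1 p.2 ≠ 0 := fun p => Set.Finite.mem_toFinset _
    have hdistS : ∀ p ∈ S, p.1 ≠ p.2 := by
      intro p hp h12
      have hz := skew_diag h2 ha.2 p.1
      rw [hmemS p] at hp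
      exact hp (by rw [h12] at hz; rw [h12]; exact hz)
    have hdecomp : (2:F)⁻¹ • (∑ p ∈ S, a p.1 p.2 • (E p.1 p.2 : Matrix I I F)) = a := by
      funext k l
      simp only [Matrix.smul_apply, Matrix.sum_apply, smul_eq_mul]
      have hsplit : ∀ p ∈ S, a p.1 p.2 * (E p.1 p.2 : Matrix I I F) k l
          = (if p = ((k,l) : I × I) then a p.1 p.2 else 0)
            - (if p = ((l,k) : I × I) then a p.1 p.2 else 0) := by
        intro p _
        rw [E_apply, mul_sub, mul_ite, mul_one, mul_zero, mul_ite, mul_one, mul_zero]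
        have e1 : (k = p.1 ∧ l = p.2) ↔ p = ((k,l) : I × I) := by
          constructor
          · rintro ⟨h1, h2⟩; exact Prod.ext h1.symm h2.symm
          · rintro rfl; exact ⟨rfl, rfl⟩
        have e2 : (k = p.2 ∧ l = p.1) ↔ p = ((l,k) : I × I) := by
          constructor
          · rintro ⟨h1, h2⟩; exact Prod.ext h2.symm h1.symm
          · rintro rfl; exact ⟨rfl, rfl⟩
        rw [if_congr e1 rfl rfl, if_congr e2 rfl rfl]
      rw [Finset.sum_congr rfl hsplit, Finset.sum_sub_distrib,
        Finset.sum_ite_eq' S ((k,l) : I × I) (fun p => a p.1 p.2),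
        Finset.sum_ite_eq' S ((l,k) : I × I) (fun p => a p.1 p.2)]
      have hv1 : (if ((k,l) : I × I) ∈ S then a k l else 0) = a k l := by
        by_cases hm : ((k,l) : I × I) ∈ S
        · exact if_pos hm
        · rw [if_neg hm]
          by_contra hne
          exact hm ((hmemS (k,l)).mpr fun h => hne h.symm)
      have hv2 : (if ((l,k) : I × I) ∈ S then a l k else 0) = a l k := by
        by_cases hm : ((l,k) : I × I) ∈ S
        · exact if_pos hm
        · rw [if_neg hm]
          by_contra hne
          exact hm ((hmemS (l,k)).mpr fun h => hne h.symm)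
      show (2:F)⁻¹ * ((if ((k,l) : I × I) ∈ S then a k l else 0)
          - (if ((l,k) : I × I) ∈ S then a l k else 0)) = a k l
      rw [hv1, hv2, haskew k l, sub_neg_eq_add, ← two_mul, inv_mul_cancel_left₀ h2]
    have hm := main S (fun p => a p.1 p.2) hdistS
    calc d a = d ((2:F)⁻¹ • ∑ p ∈ S, a p.1 p.2 • (E p.1 p.2 : Matrix I I F)) := by
          rw [hdecomp]
      _ = (2:F)⁻¹ • d (∑ p ∈ S, a p.1 p.2 • (E p.1 p.2 : Matrix I I F)) := hsmul _ _ hm.1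
      _ = (2:F)⁻¹ • (matMul y (∑ p ∈ S, a p.1 p.2 • (E p.1 p.2 : Matrix I I F))
            - matMul (∑ p ∈ S, a p.1 p.2 • (E p.1 p.2 : Matrix I I F)) y) := by rw [hm.2]
      _ = matMul y ((2:F)⁻¹ • ∑ p ∈ S, a p.1 p.2 • (E p.1 p.2 : Matrix I I F))
            - matMul ((2:F)⁻¹ • ∑ p ∈ S, a p.1 p.2 • (E p.1 p.2 : Matrix I I F)) y := by
          rw [hsmulR _ _ hm.1.1, hsmulL _ _ hm.1.1, smul_sub]
      _ = matMul y a - matMul a y := by rw [hdecomp]
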